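/- Let β_A, β_H > 0 and α_A, α_H > 0 with (β_A, α_A) ≠ (β_H, α_H) and α_H·β_A − α_A·β_H ≠ 0 (class P_SP without P_SP,1), let ω₀ ≥ 1 and n ≥ 1. Write R(y) := f_A(y)/f_H(y), G(y) := β_A·log R(y) + β_H·(1 − R(y)), L(k) := f_A(k)·log(f_A(k)/f_H(k)) and D_k := L(k+1) − L(k). Then: (i) for every y ∈ [0,∞), I_n ≥ E^{L,tan}_{y,n}, where for β_A ≠ 1, E^{L,tan}_{y,n} := G(y)·((1 − β_A^n)/(1 − β_A))·(ω₀ − α_A/(1 − β_A)) + [ (α_A/(β_A·(1 − β_A)))·G(y) + (α_H − α_A·β_H/β_A)·(1 − R(y)) ]·n, and for β_A = 1, E^{L,tan}_{y,n} := ( log R(y) + β_H·(1 − R(y)) )·( (α_A/2)·n² + (ω₀ + α_A/2)·n ) + (α_H − α_A·β_H)·(1 − R(y))·n; (ii) for every k ∈ ℕ₀, I_n ≥ E^{L,sec}_{k,n}, where for β_A ≠ 1, E^{L,sec}_{k,n} := (D_k + β_H − β_A)·((1 − β_A^n)/(1 − β_A))·(ω₀ − α_A/(1 − β_A)) + [ (α_A/(β_A·(1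 − β_A)))·(D_k + β_H − β_A) − D_k·(k + α_A/β_A) + L(k) − α_A·β_H/β_A + α_H ]·n, and for β_A = 1, E^{L,sec}_{k,n} := (D_k + β_H − 1)·( (α_A/2)·n² + (ω₀ + α_A/2)·n ) − [ D_k·(k + α_A) − L(k) + α_A·β_H − α_H ]·n. -/

import Mathlib

set_option maxHeartbeats 1000000

open Real Filter

/-- One transition weight of the Poisson Galton–Watson process with immigration:
probability that the next generation size is `y` given the previous size is `x`. -/
noncomputable def gwStep (β α : ℝ) (x y : ℕ) : ℝ :=
  Real.exp (-(β * (x : ℝ) + α)) * (β * (x : ℝ) + α) ^ y / (Nat.factorial y : ℝ)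

/-- The `n`-step path law (pmf on `Fin n → ℕ`) with initial generation size `ω₀`. -/
noncomputable def gwPath (β α : ℝ) (ω₀ n : ℕ) (ω : Fin n → ℕ) : ℝ :=
  ∏ k : Fin n,
    gwStep β α
      (if (k : ℕ) = 0 then ω₀ else ω ⟨(k : ℕ) - 1, Nat.lt_of_le_of_lt (Nat.sub_le _ _) k.2⟩)
      (ω k)

/-- Relative entropy between the `n`-step path laws (summands with vanishing
`p_A` contribute `0`, since they are multiplied by `p_A`). -/
noncomputable def relEnt (βA αA βH αH : ℝ) (ω₀ n : ℕ) : ℝ :=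
  ∑' ω : Fin n → ℕ,
    gwPath βA αA ω₀ n ω * Real.log (gwPath βA αA ω₀ n ω / gwPath βH αH ω₀ n ω)

section Aux

variable {βA βH αA αH : ℝ}


lemma tsum_pow_div_factorial (l : ℝ) :
    ∑' y : ℕ, l ^ y / (Nat.factorial y : ℝ) = Real.exp l := by
  rw [Real.exp_eq_exp_ℝ, NormedSpace.exp_eq_tsum_div]

lemma gwStep_pos {β α : ℝ} (hβ : 0 < β) (hα : 0 < α) (x y : ℕ) : 0 < gwStep β α x y := by
  have hl : 0 < β * (x : ℝ) + α := by positivity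
  have h2 : (0:ℝ) < (Nat.factorial y : ℝ) := by exact_mod_cast Nat.factorial_pos y
  unfold gwStep
  positivity

lemma gwStep_summable {β α : ℝ} (x : ℕ) : Summable (gwStep β α x) := by
  have := (Real.summable_pow_div_factorial (β * (x : ℝ) + α)).mul_left
      (Real.exp (-(β * (x : ℝ) + α)))
  refine this.congr fun y => ?_
  simp [gwStep, mul_div_assoc]

lemma gwStep_tsum {β α : ℝ} (x : ℕ) : ∑' y, gwStep β α x y = 1 := by
  have h := tsum_pow_div_factorial (β * (x : ℝ) + α)
  calc ∑' y, gwStep β α x y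
      = Real.exp (-(β * (x : ℝ) + α)) *
        ∑' y : ℕ, (β * (x : ℝ) + α) ^ y / (Nat.factorial y : ℝ) := by
        rw [← tsum_mul_left]; apply tsum_congr; intro y; simp [gwStep, mul_div_assoc]
    _ = 1 := by
        rw [h, ← Real.exp_add, neg_add_cancel, Real.exp_zero]

lemma gwStep_succ_eq {β α : ℝ} (x : ℕ) (y : ℕ) :
    gwStep β α x (y+1) * ((y:ℝ)+1) =
      Real.exp (-(β * (x : ℝ) + α)) * ((β * (x : ℝ) + α) *
        ((β * (x : ℝ) + α) ^ y / (Nat.factorial y : ℝ))) := by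
  have hy : ((y:ℝ)+1) ≠ 0 := by positivity
  have hf : ((Nat.factorial y : ℝ)) ≠ 0 := by exact_mod_cast (Nat.factorial_pos y).ne'
  simp only [gwStep, Nat.factorial_succ, pow_succ]
  push_cast
  field_simp

lemma gwStep_mean_summable {β α : ℝ} (x : ℕ) :
    Summable (fun y : ℕ => gwStep β α x y * y) := by
  set l := β * (x : ℝ) + α with hl
  have h : Summable (fun y : ℕ => Real.exp (-l) * (l * (l ^ y / (Nat.factorial y : ℝ)))) :=
    ((Real.summable_pow_div_factorial l).mul_left l).mul_left _
  rw [← summable_nat_add_iff 1]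
  refine h.congr fun y => ?_
  have := gwStep_succ_eq (β := β) (α := α) x y
  push_cast
  rw [← this]

lemma gwStep_mean {β α : ℝ} (x : ℕ) :
    ∑' y, gwStep β α x y * y = β * (x : ℝ) + α := by
  set l := β * (x : ℝ) + α with hl
  rw [Summable.tsum_eq_zero_add (gwStep_mean_summable x)]
  have h0 : gwStep β α x 0 * (0:ℕ) = 0 := by simp
  have : ∑' y : ℕ, gwStep β α x (y+1) * ((y:ℕ)+1:ℕ) =
      ∑' y : ℕ, Real.exp (-l) * (l * (l ^ y / (Nat.factorial y : ℝ))) := by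
    apply tsum_congr; intro y
    have := gwStep_succ_eq (β := β) (α := α) x y
    push_cast
    rw [← this]
  push_cast
  push_cast at this
  rw [this, tsum_mul_left, tsum_mul_left, tsum_pow_div_factorial]
  have h2 : rexp (-l) * (l * rexp l) = l * (rexp (-l) * rexp l) := by ring
  rw [mul_zero, zero_add, h2, ← Real.exp_add, neg_add_cancel, Real.exp_zero, mul_one]

lemma gwPath_zero (β α : ℝ) (x : ℕ) (ω : Fin 0 → ℕ) : gwPath β α x 0 ω = 1 := by
  simp [gwPath]

lemma gwPath_cons (β α : ℝ) (x y : ℕ) (n : ℕ) (ω : Fin n → ℕ) :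
    gwPath β α x (n+1) (Fin.cons y ω) = gwStep β α x y * gwPath β α y n ω := by
  unfold gwPath
  rw [Fin.prod_univ_succ]
  refine congrArg₂ (· * ·) (by simp) ?_
  apply Finset.prod_congr rfl
  intro i _
  rcases i with ⟨iv, hiv⟩
  cases iv with
  | zero => rfl
  | succ j => rfl

def finConsEquiv (n : ℕ) : ℕ × (Fin n → ℕ) ≃ (Fin (n+1) → ℕ) where
  toFun p := Fin.cons p.1 p.2
  invFun ω := (ω 0, Fin.tail ω)
  left_inv p := by simp [Fin.tail_cons]
  right_inv ω := by simp [Fin.cons_self_tail]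

lemma gwPath_pos {β α : ℝ} (hβ : 0 < β) (hα : 0 < α) (x : ℕ) (n : ℕ) (ω : Fin n → ℕ) :
    0 < gwPath β α x n ω := by
  unfold gwPath
  exact Finset.prod_pos fun k _ => gwStep_pos hβ hα _ _

lemma gwPath_mass {β α : ℝ} (hβ : 0 < β) (hα : 0 < α) :
    ∀ n x, Summable (gwPath β α x n) ∧ ∑' ω, gwPath β α x n ω = 1 := by
  intro n
  induction n with
  | zero =>
      intro x
      constructor
      · exact Summable.of_finite
      · rw [tsum_eq_single (Classical.arbitrary _)]
        · exact gwPath_zero β α x _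
        · intro b' hb'; exact absurd (Subsingleton.elim b' _) hb'
  | succ n ih =>
      intro x
      have hfun : ∀ p : ℕ × (Fin n → ℕ),
          gwPath β α x (n+1) (finConsEquiv n p) = gwStep β α x p.1 * gwPath β α p.1 n p.2 :=
        fun p => gwPath_cons β α x p.1 n p.2
      have hnn : ∀ p : ℕ × (Fin n → ℕ), 0 ≤ gwStep β α x p.1 * gwPath β α p.1 n p.2 :=
        fun p => le_of_lt (mul_pos (gwStep_pos hβ hα _ _) (gwPath_pos hβ hα _ _ _))
      have houter : Summable (fun y : ℕ => ∑' ω' : Fin n → ℕ, gwStep β α x y * gwPath β α y n ω') := by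
        apply Summable.congr (gwStep_summable x)
        intro y
        rw [tsum_mul_left, (ih y).2, mul_one]
      have hinner : ∀ y : ℕ, Summable (fun ω' : Fin n → ℕ => gwStep β α x y * gwPath β α y n ω') :=
        fun y => (ih y).1.mul_left _
      have hsumpair : Summable (fun p : ℕ × (Fin n → ℕ) =>
          gwStep β α x p.1 * gwPath β α p.1 n p.2) := by
        refine (summable_prod_of_nonneg ?_).2 ⟨hinner, houter⟩
        exact hnn
      constructor
      · rw [← (finConsEquiv n).summable_iff]
        exact hsumpair.congr fun p => (hfun p).symm
      · rw [← (finConsEquiv n).tsum_eq]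
        have hiter : ∑' p : ℕ × (Fin n → ℕ), gwStep β α x p.1 * gwPath β α p.1 n p.2
            = ∑' y, ∑' ω', gwStep β α x y * gwPath β α y n ω' := Summable.tsum_prod' hsumpair hinner
        rw [tsum_congr hfun, hiter]
        calc ∑' y, ∑' ω', gwStep β α x y * gwPath β α y n ω'
            = ∑' y, gwStep β α x y := by
              apply tsum_congr; intro y; rw [tsum_mul_left, (ih y).2, mul_one]
          _ = 1 := gwStep_tsum x

noncomputable def stepCost (βA αA βH αH : ℝ) (x y : ℕ) : ℝ :=
  ((βH * (x:ℝ) + αH) - (βA * (x:ℝ) + αA))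
    + (y : ℝ) * Real.log ((βA * (x:ℝ) + αA) / (βH * (x:ℝ) + αH))

noncomputable def kapGW (βA αA βH αH : ℝ) (x : ℕ) : ℝ :=
  (βA * (x:ℝ) + αA) * Real.log ((βA * (x:ℝ) + αA) / (βH * (x:ℝ) + αH))
    + (βH * (x:ℝ) + αH) - (βA * (x:ℝ) + αA)

noncomputable def phiGW (βA αA βH αH : ℝ) (n x : ℕ) (ω : Fin n → ℕ) : ℝ :=
  gwPath βA αA x n ω * Real.log (gwPath βA αA x n ω / gwPath βH αH x n ω)

lemma gwStep_affine_summable {β α : ℝ} (x : ℕ) (a b : ℝ) :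
    Summable (fun y : ℕ => gwStep β α x y * ((y:ℝ) * a + b)) := by
  have h := ((gwStep_mean_summable (β:=β) (α:=α) x).mul_right a).add
    ((gwStep_summable (β:=β) (α:=α) x).mul_right b)
  exact h.congr fun y => by ring

lemma gwStep_affine_tsum {β α : ℝ} (x : ℕ) (a b : ℝ) :
    ∑' y, gwStep β α x y * ((y:ℝ) * a + b) = (β * (x:ℝ) + α) * a + b := by
  have h1 : (fun y : ℕ => gwStep β α x y * ((y:ℝ) * a + b))
      = fun y : ℕ => (gwStep β α x y * (y:ℝ)) * a + (gwStep β α x y) * b :=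
    funext fun y => by ring
  rw [h1, Summable.tsum_add ((gwStep_mean_summable x).mul_right a) ((gwStep_summable x).mul_right b),
    tsum_mul_right, tsum_mul_right, gwStep_mean, gwStep_tsum, one_mul]

lemma log_gwStep_ratio {βA βH αA αH : ℝ}
    (hβA : 0 < βA) (hβH : 0 < βH) (hαA : 0 < αA) (hαH : 0 < αH) (x y : ℕ) :
    Real.log (gwStep βA αA x y / gwStep βH αH x y) = stepCost βA αA βH αH x y := by
  have hlA : (0:ℝ) < βA * (x:ℝ) + αA := by positivity
  have hlH : (0:ℝ) < βH * (x:ℝ) + αH := by positivity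
  have hfac : (0:ℝ) < (Nat.factorial y : ℝ) := by exact_mod_cast Nat.factorial_pos y
  have hA := gwStep_pos hβA hαA x y
  have hH := gwStep_pos hβH hαH x y
  have eA : Real.log (gwStep βA αA x y)
      = -(βA * (x:ℝ) + αA) + (y:ℝ) * Real.log (βA * (x:ℝ) + αA) - Real.log (Nat.factorial y : ℝ) := by
    unfold gwStep
    rw [Real.log_div (by positivity) hfac.ne', Real.log_mul (Real.exp_ne_zero _) (by positivity),
      Real.log_exp, Real.log_pow]
  have eH : Real.log (gwStep βH αH x y)
      = -(βH * (x:ℝ) + αH) + (y:ℝ) * Real.log (βH * (x:ℝ) + αH) - Real.log (Nat.factorial y : ℝ) := by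
    unfold gwStep
    rw [Real.log_div (by positivity) hfac.ne', Real.log_mul (Real.exp_ne_zero _) (by positivity),
      Real.log_exp, Real.log_pow]
  rw [Real.log_div hA.ne' hH.ne', eA, eH]
  unfold stepCost
  rw [Real.log_div hlA.ne' hlH.ne']
  ring

lemma kapGW_tsum {βA βH αA αH : ℝ}
    (hβA : 0 < βA) (hβH : 0 < βH) (hαA : 0 < αA) (hαH : 0 < αH) (x : ℕ) :
    ∑' y, gwStep βA αA x y * stepCost βA αA βH αH x y = kapGW βA αA βH αH x := by
  have h1 : ∀ y : ℕ, gwStep βA αA x y * stepCost βA αA βH αH x y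
      = gwStep βA αA x y * ((y:ℝ) * Real.log ((βA * (x:ℝ) + αA) / (βH * (x:ℝ) + αH))
          + ((βH * (x:ℝ) + αH) - (βA * (x:ℝ) + αA))) := fun y => by unfold stepCost; ring
  rw [tsum_congr h1, gwStep_affine_tsum]
  unfold kapGW; ring

lemma kapGW_summable {βA βH αA αH : ℝ} (x : ℕ) :
    Summable (fun y => gwStep βA αA x y * stepCost βA αA βH αH x y) := by
  have h := gwStep_affine_summable (β:=βA) (α:=αA) x
    (Real.log ((βA * (x:ℝ) + αA) / (βH * (x:ℝ) + αH)))
    ((βH * (x:ℝ) + αH) - (βA * (x:ℝ) + αA))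
  exact h.congr fun y => by unfold stepCost; ring

lemma ratio_bounds {βA βH αA αH : ℝ}
    (hβA : 0 < βA) (hβH : 0 < βH) (hαA : 0 < αA) (hαH : 0 < αH) (t : ℝ) (ht : 0 ≤ t) :
    min (βA/βH) (αA/αH) ≤ (βA * t + αA) / (βH * t + αH) ∧
      (βA * t + αA) / (βH * t + αH) ≤ max (βA/βH) (αA/αH) := by
  have hlH : (0:ℝ) < βH * t + αH := by positivity
  constructor
  · rw [le_div_iff₀ hlH]
    have h1 : min (βA/βH) (αA/αH) * βH ≤ βA := by
      rw [← le_div_iff₀ hβH]; exact min_le_left _ _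
    have h2 : min (βA/βH) (αA/αH) * αH ≤ αA := by
      rw [← le_div_iff₀ hαH]; exact min_le_right _ _
    nlinarith
  · rw [div_le_iff₀ hlH]
    have h1 : βA ≤ max (βA/βH) (αA/αH) * βH := by
      rw [← div_le_iff₀ hβH]; exact le_max_left _ _
    have h2 : αA ≤ max (βA/βH) (αA/αH) * αH := by
      rw [← div_le_iff₀ hαH]; exact le_max_right _ _
    nlinarith

lemma log_ratio_bound {βA βH αA αH : ℝ}
    (hβA : 0 < βA) (hβH : 0 < βH) (hαA : 0 < αA) (hαH : 0 < αH) (t : ℝ) (ht : 0 ≤ t) :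
    |Real.log ((βA * t + αA) / (βH * t + αH))|
      ≤ max |Real.log (min (βA/βH) (αA/αH))| |Real.log (max (βA/βH) (αA/αH))| := by
  obtain ⟨h1, h2⟩ := ratio_bounds hβA hβH hαA hαH t ht
  have hmin : (0:ℝ) < min (βA/βH) (αA/αH) := lt_min (by positivity) (by positivity)
  have hlog1 : Real.log (min (βA/βH) (αA/αH)) ≤ Real.log ((βA * t + αA) / (βH * t + αH)) :=
    Real.log_le_log hmin h1
  have hlog2 : Real.log ((βA * t + αA) / (βH * t + αH)) ≤ Real.log (max (βA/βH) (αA/αH)) :=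
    Real.log_le_log (by positivity) h2
  rw [abs_le]
  constructor
  · calc -(max |Real.log (min (βA/βH) (αA/αH))| |Real.log (max (βA/βH) (αA/αH))|)
        ≤ -|Real.log (min (βA/βH) (αA/αH))| := by
          apply neg_le_neg; exact le_max_left _ _
      _ ≤ Real.log (min (βA/βH) (αA/αH)) := neg_abs_le _
      _ ≤ _ := hlog1
  · calc Real.log ((βA * t + αA) / (βH * t + αH))
        ≤ Real.log (max (βA/βH) (αA/αH)) := hlog2
      _ ≤ |Real.log (max (βA/βH) (αA/αH))| := le_abs_self _
      _ ≤ _ := le_max_right _ _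

lemma stepCost_abs_bound (hβA : 0 < βA) (hβH : 0 < βH) (hαA : 0 < αA) (hαH : 0 < αH)
    (x y : ℕ) :
    |stepCost βA αA βH αH x y| ≤
      (|βH - βA| + |αH - αA|) * ((x:ℝ)+1)
        + (max |Real.log (min (βA/βH) (αA/αH))| |Real.log (max (βA/βH) (αA/αH))|) * y := by
  have hM := log_ratio_bound hβA hβH hαA hαH (x:ℝ) (Nat.cast_nonneg x)
  have h1 : |((βH * (x:ℝ) + αH) - (βA * (x:ℝ) + αA))| ≤ |βH - βA| * (x:ℝ) + |αH - αA| := by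
    have : (βH * (x:ℝ) + αH) - (βA * (x:ℝ) + αA) = (βH - βA) * (x:ℝ) + (αH - αA) := by ring
    rw [this]
    calc |(βH - βA) * (x:ℝ) + (αH - αA)| ≤ |(βH - βA) * (x:ℝ)| + |αH - αA| := abs_add_le _ _
      _ = |βH - βA| * (x:ℝ) + |αH - αA| := by
          rw [abs_mul, Nat.abs_cast]
  have h2 : |(y : ℝ) * Real.log ((βA * (x:ℝ) + αA) / (βH * (x:ℝ) + αH))|
      ≤ (max |Real.log (min (βA/βH) (αA/αH))| |Real.log (max (βA/βH) (αA/αH))|) * y := by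
    rw [abs_mul, Nat.abs_cast, mul_comm]
    exact mul_le_mul_of_nonneg_right hM (Nat.cast_nonneg y)
  have h3 := abs_add_le (((βH * (x:ℝ) + αH) - (βA * (x:ℝ) + αA)))
    ((y : ℝ) * Real.log ((βA * (x:ℝ) + αA) / (βH * (x:ℝ) + αH)))
  unfold stepCost
  have hx0 : (0:ℝ) ≤ (x:ℝ) := Nat.cast_nonneg x
  have hab : (0:ℝ) ≤ |βH - βA| := abs_nonneg _
  nlinarith [h3, h1, h2, mul_nonneg (abs_nonneg (αH - αA)) hx0, abs_nonneg (αH - αA)]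

lemma phiGW_cons (hβA : 0 < βA) (hβH : 0 < βH) (hαA : 0 < αA) (hαH : 0 < αH)
    (n x y : ℕ) (ω : Fin n → ℕ) :
    phiGW βA αA βH αH (n+1) x (Fin.cons y ω)
      = gwStep βA αA x y *
          (gwPath βA αA y n ω * stepCost βA αA βH αH x y + phiGW βA αA βH αH n y ω) := by
  unfold phiGW
  rw [gwPath_cons, gwPath_cons]
  have h1 : gwStep βA αA x y * gwPath βA αA y n ω / (gwStep βH αH x y * gwPath βH αH y n ω)
      = (gwStep βA αA x y / gwStep βH αH x y) * (gwPath βA αA y n ω / gwPath βH αH y n ω) :=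
    mul_div_mul_comm _ _ _ _
  rw [h1, Real.log_mul (div_pos (gwStep_pos hβA hαA x y) (gwStep_pos hβH hαH x y)).ne'
      (div_pos (gwPath_pos hβA hαA y n ω) (gwPath_pos hβH hαH y n ω)).ne',
    log_gwStep_ratio hβA hβH hαA hαH]
  ring

lemma phiGW_abs (hβA : 0 < βA) (hβH : 0 < βH) (hαA : 0 < αA) (hαH : 0 < αH) :
    ∀ n : ℕ, ∃ C : ℝ, 0 ≤ C ∧ ∀ x : ℕ,
      Summable (fun ω => |phiGW βA αA βH αH n x ω|) ∧
      (∑' ω, |phiGW βA αA βH αH n x ω|) ≤ C * ((x:ℝ)+1) := by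
  intro n
  induction n with
  | zero =>
      refine ⟨0, le_refl 0, fun x => ?_⟩
      have hz : ∀ ω : Fin 0 → ℕ, |phiGW βA αA βH αH 0 x ω| = 0 := by
        intro ω
        unfold phiGW
        rw [gwPath_zero, gwPath_zero]
        simp
      constructor
      · exact Summable.of_finite
      · rw [tsum_congr hz]
        simp
  | succ n ih =>
      obtain ⟨C, hC0, hABS⟩ := ih
      set M := max |Real.log (min (βA/βH) (αA/αH))| |Real.log (max (βA/βH) (αA/αH))| with hM
      set K := |βH - βA| + |αH - αA| with hK
      have hM0 : 0 ≤ M := le_trans (abs_nonneg _) (le_max_left _ _)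
      have hK0 : 0 ≤ K := by positivity
      refine ⟨K + (M + C) * (βA + αA) + C, by positivity, fun x => ?_⟩
      have hx0 : (0:ℝ) ≤ (x:ℝ) := Nat.cast_nonneg x
      -- pointwise bound
      have hpt : ∀ y : ℕ, ∀ ω : Fin n → ℕ,
          |phiGW βA αA βH αH (n+1) x (Fin.cons y ω)| ≤
            gwStep βA αA x y * (gwPath βA αA y n ω * |stepCost βA αA βH αH x y|
              + |phiGW βA αA βH αH n y ω|) := by
        intro y ω
        rw [phiGW_cons hβA hβH hαA hαH, abs_mul, abs_of_pos (gwStep_pos hβA hαA x y)]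
        apply mul_le_mul_of_nonneg_left _ (gwStep_pos hβA hαA x y).le
        calc |gwPath βA αA y n ω * stepCost βA αA βH αH x y + phiGW βA αA βH αH n y ω|
            ≤ |gwPath βA αA y n ω * stepCost βA αA βH αH x y| + |phiGW βA αA βH αH n y ω| :=
              abs_add_le _ _
          _ = gwPath βA αA y n ω * |stepCost βA αA βH αH x y| + |phiGW βA αA βH αH n y ω| := by
              rw [abs_mul, abs_of_pos (gwPath_pos hβA hαA y n ω)]
      -- majorant inner summable & tsum
      have hmajsum : ∀ y : ℕ, Summable (fun ω : Fin n → ℕ =>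
          gwStep βA αA x y * (gwPath βA αA y n ω * |stepCost βA αA βH αH x y|
            + |phiGW βA αA βH αH n y ω|)) := by
        intro y
        exact (((gwPath_mass hβA hαA n y).1.mul_right _).add (hABS y).1).mul_left _
      have hmajtsum : ∀ y : ℕ, (∑' ω : Fin n → ℕ,
          gwStep βA αA x y * (gwPath βA αA y n ω * |stepCost βA αA βH αH x y|
            + |phiGW βA αA βH αH n y ω|))
          ≤ gwStep βA αA x y * (|stepCost βA αA βH αH x y| + C * ((y:ℝ)+1)) := by
        intro y
        rw [tsum_mul_left, Summable.tsum_add ((gwPath_mass hβA hαA n y).1.mul_right _) (hABS y).1,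
          tsum_mul_right, (gwPath_mass hβA hαA n y).2, one_mul]
        exact mul_le_mul_of_nonneg_left
          (add_le_add_right (hABS y).2 _) (gwStep_pos hβA hαA x y).le
      -- inner summability of |phi (n+1)| along cons
      have hinner : ∀ y : ℕ, Summable (fun ω : Fin n → ℕ =>
          |phiGW βA αA βH αH (n+1) x (Fin.cons y ω)|) := by
        intro y
        exact Summable.of_nonneg_of_le (fun ω => abs_nonneg _) (hpt y) (hmajsum y)
      -- inner tsum bound
      have hinnerB : ∀ y : ℕ, (∑' ω : Fin n → ℕ, |phiGW βA αA βH αH (n+1) x (Fin.cons y ω)|)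
          ≤ gwStep βA αA x y * ((y:ℝ) * (M + C) + (K * ((x:ℝ)+1) + C)) := by
        intro y
        have h1 := Summable.tsum_le_tsum (hpt y) (hinner y) (hmajsum y)
        have h2 := hmajtsum y
        have h3 : |stepCost βA αA βH αH x y| + C * ((y:ℝ)+1)
            ≤ (y:ℝ) * (M + C) + (K * ((x:ℝ)+1) + C) := by
          have := stepCost_abs_bound hβA hβH hαA hαH x y
          rw [← hM, ← hK] at this
          have hy0 : (0:ℝ) ≤ (y:ℝ) := Nat.cast_nonneg y
          nlinarith
        calc (∑' ω : Fin n → ℕ, |phiGW βA αA βH αH (n+1) x (Fin.cons y ω)|)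
            ≤ gwStep βA αA x y * (|stepCost βA αA βH αH x y| + C * ((y:ℝ)+1)) :=
              le_trans h1 h2
          _ ≤ _ := mul_le_mul_of_nonneg_left h3 (gwStep_pos hβA hαA x y).le
      -- outer summability
      have houter : Summable (fun y : ℕ =>
          ∑' ω : Fin n → ℕ, |phiGW βA αA βH αH (n+1) x (Fin.cons y ω)|) := by
        apply Summable.of_nonneg_of_le (fun y => tsum_nonneg fun ω => abs_nonneg _) hinnerB
        exact gwStep_affine_summable x _ _
      -- full summability via the equiv
      have hpairfun : ∀ p : ℕ × (Fin n → ℕ),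
          |phiGW βA αA βH αH (n+1) x (finConsEquiv n p)|
          = |phiGW βA αA βH αH (n+1) x (Fin.cons p.1 p.2)| := fun p => rfl
      have hpair : Summable (fun p : ℕ × (Fin n → ℕ) =>
          |phiGW βA αA βH αH (n+1) x (finConsEquiv n p)|) := by
        refine (summable_prod_of_nonneg ?_).2 ⟨fun y => hinner y, houter⟩
        intro p; exact abs_nonneg _
      have hsum : Summable (fun ω => |phiGW βA αA βH αH (n+1) x ω|) :=
        ((finConsEquiv n).summable_iff).1 hpair
      refine ⟨hsum, ?_⟩
      have htsum : (∑' ω, |phiGW βA αA βH αH (n+1) x ω|)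
          = ∑' y : ℕ, ∑' ω : Fin n → ℕ, |phiGW βA αA βH αH (n+1) x (Fin.cons y ω)| := by
        rw [← (finConsEquiv n).tsum_eq]
        exact Summable.tsum_prod' hpair hinner
      rw [htsum]
      have hstep2 : (∑' y : ℕ, gwStep βA αA x y * ((y:ℝ) * (M + C) + (K * ((x:ℝ)+1) + C)))
          = (βA * (x:ℝ) + αA) * (M + C) + (K * ((x:ℝ)+1) + C) := gwStep_affine_tsum x _ _
      calc (∑' y : ℕ, ∑' ω : Fin n → ℕ, |phiGW βA αA βH αH (n+1) x (Fin.cons y ω)|)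
          ≤ ∑' y : ℕ, gwStep βA αA x y * ((y:ℝ) * (M + C) + (K * ((x:ℝ)+1) + C)) :=
            Summable.tsum_le_tsum hinnerB houter (gwStep_affine_summable x _ _)
        _ = (βA * (x:ℝ) + αA) * (M + C) + (K * ((x:ℝ)+1) + C) := hstep2
        _ ≤ (K + (M + C) * (βA + αA) + C) * ((x:ℝ)+1) := by nlinarith [mul_nonneg (add_nonneg hM0 hC0) (add_nonneg hβA.le (mul_nonneg hαA.le hx0)), mul_nonneg hC0 hx0]

noncomputable def KLGW (βA αA βH αH : ℝ) (n x : ℕ) : ℝ := ∑' ω, phiGW βA αA βH αH n x ω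



lemma KLGW_zero (x : ℕ) : KLGW βA αA βH αH 0 x = 0 := by
  unfold KLGW
  have hz : ∀ ω : Fin 0 → ℕ, phiGW βA αA βH αH 0 x ω = 0 := by
    intro ω
    unfold phiGW
    rw [gwPath_zero, gwPath_zero]
    simp
  rw [tsum_congr hz, tsum_zero]

lemma KLGW_rec (hβA : 0 < βA) (hβH : 0 < βH) (hαA : 0 < αA) (hαH : 0 < αH) (n x : ℕ) :
    Summable (fun y => gwStep βA αA x y * KLGW βA αA βH αH n y) ∧
    KLGW βA αA βH αH (n+1) x
      = kapGW βA αA βH αH x + ∑' y, gwStep βA αA x y * KLGW βA αA βH αH n y := by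
  obtain ⟨C, hC0, hABS⟩ := phiGW_abs hβA hβH hαA hαH n
  have hKLb : ∀ y : ℕ, |KLGW βA αA βH αH n y| ≤ C * ((y:ℝ)+1) := by
    intro y
    calc |KLGW βA αA βH αH n y| ≤ ∑' ω, |phiGW βA αA βH αH n y ω| := by
          have := norm_tsum_le_tsum_norm (f := phiGW βA αA βH αH n y) ?_
          · simpa [KLGW] using this
          · simpa using (hABS y).1
      _ ≤ C * ((y:ℝ)+1) := (hABS y).2
  have hsumKL : Summable (fun y => gwStep βA αA x y * KLGW βA αA βH αH n y) := by
    apply Summable.of_norm_bounded (g := fun y => gwStep βA αA x y * (C * ((y:ℝ)+1)))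
    · have h := gwStep_affine_summable (β := βA) (α := αA) x C C
      exact h.congr fun y => by ring
    · intro y
      rw [Real.norm_eq_abs, abs_mul, abs_of_pos (gwStep_pos hβA hαA x y)]
      exact mul_le_mul_of_nonneg_left (hKLb y) (gwStep_pos hβA hαA x y).le
  refine ⟨hsumKL, ?_⟩
  have hphisum : ∀ m y, Summable (phiGW βA αA βH αH m y) := by
    intro m y
    obtain ⟨C', _, hA⟩ := phiGW_abs hβA hβH hαA hαH m
    exact summable_abs_iff.1 (hA y).1
  set g1 : ℕ × (Fin n → ℕ) → ℝ :=
    fun p => gwStep βA αA x p.1 * stepCost βA αA βH αH x p.1 * gwPath βA αA p.1 n p.2 with hg1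
  set g2 : ℕ × (Fin n → ℕ) → ℝ :=
    fun p => gwStep βA αA x p.1 * phiGW βA αA βH αH n p.1 p.2 with hg2
  have hsplit : ∀ p : ℕ × (Fin n → ℕ),
      phiGW βA αA βH αH (n+1) x (finConsEquiv n p) = g1 p + g2 p := by
    rintro ⟨y, ω⟩
    simp only [hg1, hg2]
    rw [show (finConsEquiv n (y, ω)) = Fin.cons y ω from rfl,
      phiGW_cons hβA hβH hαA hαH]
    ring
  -- summability of g1
  have hg1inner : ∀ y : ℕ, Summable (fun ω : Fin n → ℕ => g1 (y, ω)) := by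
    intro y
    have h := (gwPath_mass hβA hαA n y).1.mul_left
      (gwStep βA αA x y * stepCost βA αA βH αH x y)
    exact h.congr fun ω => by simp only [hg1]
  have hg1eq : ∀ y : ℕ, ∑' ω : Fin n → ℕ, |g1 (y, ω)|
      = |gwStep βA αA x y * stepCost βA αA βH αH x y| := by
    intro y
    have h : ∀ ω : Fin n → ℕ, |g1 (y, ω)|
        = |gwStep βA αA x y * stepCost βA αA βH αH x y| * gwPath βA αA y n ω := by
      intro ω
      rw [hg1, abs_mul, abs_of_pos (gwPath_pos hβA hαA y n ω)]
    rw [tsum_congr h, tsum_mul_left, (gwPath_mass hβA hαA n y).2, mul_one]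
  have hg1abs : Summable (fun p => |g1 p|) := by
    refine (summable_prod_of_nonneg (fun p => abs_nonneg _)).2 ⟨fun y => (hg1inner y).abs, ?_⟩
    exact Summable.congr (kapGW_summable (βA := βA) (βH := βH) (αA := αA) (αH := αH) x).abs
      fun y => (hg1eq y).symm
  have hg1sum : Summable g1 := summable_abs_iff.1 hg1abs
  -- summability of g2
  have hg2inner : ∀ y : ℕ, Summable (fun ω : Fin n → ℕ => g2 (y, ω)) := by
    intro y
    have h := (hphisum n y).mul_left (gwStep βA αA x y)
    exact h.congr fun ω => by simp only [hg2]
  have hg2eq : ∀ y : ℕ, ∑' ω : Fin n → ℕ, |g2 (y, ω)|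
      = gwStep βA αA x y * ∑' ω, |phiGW βA αA βH αH n y ω| := by
    intro y
    rw [← tsum_mul_left]
    exact tsum_congr fun ω => by rw [hg2, abs_mul, abs_of_pos (gwStep_pos hβA hαA x y)]
  have hg2abs : Summable (fun p => |g2 p|) := by
    refine (summable_prod_of_nonneg (fun p => abs_nonneg _)).2 ⟨fun y => (hg2inner y).abs, ?_⟩
    have hmaj : Summable (fun y : ℕ => gwStep βA αA x y * ((y:ℝ) * C + C)) :=
      gwStep_affine_summable x C C
    apply Summable.of_nonneg_of_le (fun y => tsum_nonneg fun ω => abs_nonneg _)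
      (fun y => ?_) hmaj
    rw [hg2eq y]
    calc gwStep βA αA x y * ∑' ω, |phiGW βA αA βH αH n y ω|
        ≤ gwStep βA αA x y * (C * ((y:ℝ)+1)) :=
          mul_le_mul_of_nonneg_left (hABS y).2 (gwStep_pos hβA hαA x y).le
      _ = gwStep βA αA x y * ((y:ℝ) * C + C) := by ring
  have hg2sum : Summable g2 := summable_abs_iff.1 hg2abs
  -- tsum computations
  have hiter1 : ∑' p : ℕ × (Fin n → ℕ), g1 p = ∑' y, ∑' ω : Fin n → ℕ, g1 (y, ω) :=
    Summable.tsum_prod' hg1sum hg1inner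
  have h1val : ∑' y, ∑' ω : Fin n → ℕ, g1 (y, ω) = kapGW βA αA βH αH x := by
    have h : ∀ y : ℕ, ∑' ω : Fin n → ℕ, g1 (y, ω)
        = gwStep βA αA x y * stepCost βA αA βH αH x y := by
      intro y
      have h0 : ∀ ω : Fin n → ℕ, g1 (y, ω)
          = (gwStep βA αA x y * stepCost βA αA βH αH x y) * gwPath βA αA y n ω :=
        fun ω => by simp only [hg1]
      rw [tsum_congr h0, tsum_mul_left, (gwPath_mass hβA hαA n y).2, mul_one]
    rw [tsum_congr h]
    exact kapGW_tsum hβA hβH hαA hαH x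
  have hiter2 : ∑' p : ℕ × (Fin n → ℕ), g2 p = ∑' y, ∑' ω : Fin n → ℕ, g2 (y, ω) :=
    Summable.tsum_prod' hg2sum hg2inner
  have h2val : ∑' y, ∑' ω : Fin n → ℕ, g2 (y, ω)
      = ∑' y, gwStep βA αA x y * KLGW βA αA βH αH n y := by
    apply tsum_congr; intro y
    have h0 : ∀ ω : Fin n → ℕ, g2 (y, ω) = gwStep βA αA x y * phiGW βA αA βH αH n y ω :=
      fun ω => by simp only [hg2]
    rw [tsum_congr h0, tsum_mul_left]
    rfl
  calc KLGW βA αA βH αH (n+1) x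
      = ∑' p : ℕ × (Fin n → ℕ), phiGW βA αA βH αH (n+1) x (finConsEquiv n p) := by
        rw [KLGW, ← (finConsEquiv n).tsum_eq]
    _ = ∑' p : ℕ × (Fin n → ℕ), (g1 p + g2 p) := tsum_congr hsplit
    _ = (∑' p : ℕ × (Fin n → ℕ), g1 p) + ∑' p : ℕ × (Fin n → ℕ), g2 p :=
        Summable.tsum_add hg1sum hg2sum
    _ = kapGW βA αA βH αH x + ∑' y, gwStep βA αA x y * KLGW βA αA βH αH n y := by
        rw [hiter1, h1val, hiter2, h2val]

noncomputable def srC (βA : ℝ) : ℕ → ℝ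
  | 0 => 0
  | n+1 => 1 + βA * srC βA n

noncomputable def srD (βA αA : ℝ) : ℕ → ℝ
  | 0 => 0
  | n+1 => srC βA n * αA + srD βA αA n


lemma KLGW_lower (hβA : 0 < βA) (hβH : 0 < βH) (hαA : 0 < αA) (hαH : 0 < αH)
    (a b : ℝ) (hk : ∀ m : ℕ, a * (m:ℝ) + b ≤ kapGW βA αA βH αH m) :
    ∀ (n : ℕ) (x : ℕ), a * (srC βA n * (x:ℝ) + srD βA αA n) + b * n ≤ KLGW βA αA βH αH n x := by
  intro n
  induction n with
  | zero =>
      intro x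
      rw [KLGW_zero]
      simp [srC, srD]
  | succ n ih =>
      intro x
      obtain ⟨hsum, hrec⟩ := KLGW_rec hβA hβH hαA hαH n x
      rw [hrec]
      have hlow : ∀ y : ℕ,
          gwStep βA αA x y * ((y:ℝ) * (a * srC βA n) + (a * srD βA αA n + b * n))
            ≤ gwStep βA αA x y * KLGW βA αA βH αH n y := by
        intro y
        apply mul_le_mul_of_nonneg_left _ (gwStep_pos hβA hαA x y).le
        have h := ih y
        nlinarith [h]
      have h3 := Summable.tsum_le_tsum hlow (gwStep_affine_summable x _ _) hsum
      rw [gwStep_affine_tsum x (a * srC βA n) (a * srD βA αA n + b * n)] at h3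
      have h4 := hk x
      have hexp : a * (srC βA (n+1) * (x:ℝ) + srD βA αA (n+1)) + b * ((n+1 : ℕ):ℝ)
          = (a * (x:ℝ) + b)
            + ((βA * (x:ℝ) + αA) * (a * srC βA n) + (a * srD βA αA n + b * n)) := by
        simp only [srC, srD]
        push_cast
        ring
      rw [hexp]
      exact add_le_add h4 h3

lemma srC_ne (hβ : βA ≠ 1) (n : ℕ) : srC βA n = (1 - βA^n)/(1-βA) := by
  have h1 : 1 - βA ≠ 0 := sub_ne_zero.2 (Ne.symm hβ)
  induction n with
  | zero => simp [srC]
  | succ n ih =>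
      simp only [srC, ih]
      field_simp
      ring

lemma srD_ne (hβ : βA ≠ 1) (n : ℕ) :
    srD βA αA n = αA * ((n:ℝ) - (1 - βA^n)/(1-βA))/(1-βA) := by
  have h1 : 1 - βA ≠ 0 := sub_ne_zero.2 (Ne.symm hβ)
  induction n with
  | zero => simp [srD]
  | succ n ih =>
      simp only [srD, ih, srC_ne hβ]
      push_cast
      field_simp
      ring

lemma srC_one (n : ℕ) : srC 1 n = (n:ℝ) := by
  induction n with
  | zero => simp [srC]
  | succ n ih => simp only [srC, ih]; push_cast; ring

lemma srD_one (αA : ℝ) (n : ℕ) : srD 1 αA n = αA * (n:ℝ) * ((n:ℝ)-1)/2 := by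
  induction n with
  | zero => simp [srD]
  | succ n ih => simp only [srD, ih, srC_one]; push_cast; ring

lemma rlog_ineq {r s : ℝ} (hr : 0 < r) (hs : 0 < s) : r - s ≤ r * Real.log (r/s) := by
  have h := Real.one_sub_inv_le_log_of_pos (div_pos hr hs)
  have h2 := mul_le_mul_of_nonneg_left h hr.le
  have h3 : r * (1 - (r/s)⁻¹) = r - s := by field_simp
  linarith [h2, h3]

lemma kap_tangent (hβA : 0 < βA) (hβH : 0 < βH) (hαA : 0 < αA) (hαH : 0 < αH)
    (y : ℝ) (hy : 0 ≤ y) (m : ℕ) :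
    (βA * Real.log ((βA*y+αA)/(βH*y+αH)) + βH * (1 - (βA*y+αA)/(βH*y+αH))) * (m:ℝ)
      + (αA * Real.log ((βA*y+αA)/(βH*y+αH)) + αH * (1 - (βA*y+αA)/(βH*y+αH)))
      ≤ kapGW βA αA βH αH m := by
  unfold kapGW
  have hm0 : (0:ℝ) ≤ (m:ℝ) := Nat.cast_nonneg m
  have hlA : (0:ℝ) < βA*(m:ℝ)+αA := by positivity
  have hlH : (0:ℝ) < βH*(m:ℝ)+αH := by positivity
  set s := (βA*y+αA)/(βH*y+αH) with hsdef
  set r := (βA*(m:ℝ)+αA)/(βH*(m:ℝ)+αH) with hrdef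
  have hs : 0 < s := by rw [hsdef]; positivity
  have hr : 0 < r := by rw [hrdef]; positivity
  have hkey := rlog_ineq hr hs
  have hlog : Real.log (r/s) = Real.log r - Real.log s := Real.log_div hr.ne' hs.ne'
  have hlAr : βA*(m:ℝ)+αA = r * (βH*(m:ℝ)+αH) := by rw [hrdef]; field_simp
  have hkeymul : (βH*(m:ℝ)+αH) * (r - s)
      ≤ (βH*(m:ℝ)+αH) * (r * (Real.log r - Real.log s)) := by
    have h := mul_le_mul_of_nonneg_left hkey hlH.le
    rwa [hlog] at h
  have heq2 : (βA*(m:ℝ)+αA) * (Real.log r - Real.log s)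
      = r * (βH*(m:ℝ)+αH) * (Real.log r - Real.log s) := by rw [← hlAr]
  nlinarith [hkeymul, heq2, hlAr]

lemma ell_convexOn (hβA : 0 < βA) (hβH : 0 < βH) (hαA : 0 < αA) (hαH : 0 < αH) :
    ConvexOn ℝ (Set.Ici (0:ℝ))
      (fun t => (βA*t+αA) * (Real.log (βA*t+αA) - Real.log (βH*t+αH))) := by
  apply convexOn_of_hasDerivWithinAt2_nonneg (convex_Ici 0)
    (f' := fun t => βA * (Real.log (βA*t+αA) - Real.log (βH*t+αH))
      + βA - (βA*t+αA) * βH / (βH*t+αH))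
    (f'' := fun t => (βA*(βH*t+αH) - βH*(βA*t+αA))^2 / ((βA*t+αA)*(βH*t+αH)^2))
  · -- continuity
    intro t ht
    have ht0 : (0:ℝ) ≤ t := ht
    have hu0 : (0:ℝ) < βA*t+αA := by positivity
    have hv0 : (0:ℝ) < βH*t+αH := by positivity
    apply ContinuousAt.continuousWithinAt
    have hu_c : ContinuousAt (fun s : ℝ => βA*s+αA) t := by fun_prop
    have hv_c : ContinuousAt (fun s : ℝ => βH*s+αH) t := by fun_prop
    exact hu_c.mul ((hu_c.log hu0.ne').sub (hv_c.log hv0.ne'))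
  · -- first derivative
    intro t ht
    rw [interior_Ici] at ht
    have ht0 : (0:ℝ) < t := ht
    have hu0 : (0:ℝ) < βA*t+αA := by positivity
    have hv0 : (0:ℝ) < βH*t+αH := by positivity
    have hu : HasDerivAt (fun s : ℝ => βA*s+αA) βA t := by
      simpa using ((hasDerivAt_id t).const_mul βA).add_const αA
    have hv : HasDerivAt (fun s : ℝ => βH*s+αH) βH t := by
      simpa using ((hasDerivAt_id t).const_mul βH).add_const αH
    have hlogu : HasDerivAt (fun s : ℝ => Real.log (βA*s+αA)) (βA/(βA*t+αA)) t :=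
      hu.log hu0.ne'
    have hlogv : HasDerivAt (fun s : ℝ => Real.log (βH*s+αH)) (βH/(βH*t+αH)) t :=
      hv.log hv0.ne'
    have hf : HasDerivAt (fun s : ℝ => (βA*s+αA) * (Real.log (βA*s+αA) - Real.log (βH*s+αH)))
        (βA * (Real.log (βA*t+αA) - Real.log (βH*t+αH))
          + (βA*t+αA) * (βA/(βA*t+αA) - βH/(βH*t+αH))) t :=
      hu.mul (hlogu.sub hlogv)
    have hval : βA * (Real.log (βA*t+αA) - Real.log (βH*t+αH))
          + (βA*t+αA) * (βA/(βA*t+αA) - βH/(βH*t+αH))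
        = βA * (Real.log (βA*t+αA) - Real.log (βH*t+αH))
          + βA - (βA*t+αA) * βH / (βH*t+αH) := by
      field_simp
      ring
    rw [hval] at hf
    exact hf.hasDerivWithinAt
  · -- second derivative
    intro t ht
    rw [interior_Ici] at ht
    have ht0 : (0:ℝ) < t := ht
    have hu0 : (0:ℝ) < βA*t+αA := by positivity
    have hv0 : (0:ℝ) < βH*t+αH := by positivity
    have hu : HasDerivAt (fun s : ℝ => βA*s+αA) βA t := by
      simpa using ((hasDerivAt_id t).const_mul βA).add_const αA
    have hv : HasDerivAt (fun s : ℝ => βH*s+αH) βH t := by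
      simpa using ((hasDerivAt_id t).const_mul βH).add_const αH
    have hlogu : HasDerivAt (fun s : ℝ => Real.log (βA*s+αA)) (βA/(βA*t+αA)) t :=
      hu.log hu0.ne'
    have hlogv : HasDerivAt (fun s : ℝ => Real.log (βH*s+αH)) (βH/(βH*t+αH)) t :=
      hv.log hv0.ne'
    have hdiv : HasDerivAt (fun s : ℝ => (βA*s+αA) * βH / (βH*s+αH))
        ((βA * βH * (βH*t+αH) - (βA*t+αA) * βH * βH) / (βH*t+αH)^2) t :=
      HasDerivAt.div (hu.mul_const βH) hv hv0.ne'
    have hg : HasDerivAt (fun s : ℝ => βA * (Real.log (βA*s+αA) - Real.log (βH*s+αH))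
          + βA - (βA*s+αA) * βH / (βH*s+αH))
        (βA * (βA/(βA*t+αA) - βH/(βH*t+αH))
          - (βA * βH * (βH*t+αH) - (βA*t+αA) * βH * βH) / (βH*t+αH)^2) t :=
      (((hlogu.sub hlogv).const_mul βA).add_const βA).sub hdiv
    have hval : βA * (βA/(βA*t+αA) - βH/(βH*t+αH))
          - (βA * βH * (βH*t+αH) - (βA*t+αA) * βH * βH) / (βH*t+αH)^2
        = (βA*(βH*t+αH) - βH*(βA*t+αA))^2 / ((βA*t+αA)*(βH*t+αH)^2) := by
      field_simp
    rw [hval] at hg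
    exact hg.hasDerivWithinAt
  · -- nonneg
    intro t ht
    rw [interior_Ici] at ht
    have ht0 : (0:ℝ) < t := ht
    have hu0 : (0:ℝ) < βA*t+αA := by positivity
    have hv0 : (0:ℝ) < βH*t+αH := by positivity
    exact div_nonneg (sq_nonneg _) (by positivity)

lemma convex_secant_nat {f : ℝ → ℝ} (hf : ConvexOn ℝ (Set.Ici (0:ℝ)) f) (k m : ℕ) :
    f (k:ℝ) + (f ((k:ℝ)+1) - f (k:ℝ)) * ((m:ℝ) - (k:ℝ)) ≤ f (m:ℝ) := by
  have hk0 : ((k:ℝ)) ∈ Set.Ici (0:ℝ) := Set.mem_Ici.mpr (Nat.cast_nonneg k)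
  have hk10 : ((k:ℝ)+1) ∈ Set.Ici (0:ℝ) := by
    have : (0:ℝ) ≤ (k:ℝ) := Nat.cast_nonneg k
    simp [Set.mem_Ici]; linarith
  have hm0 : ((m:ℝ)) ∈ Set.Ici (0:ℝ) := Set.mem_Ici.mpr (Nat.cast_nonneg m)
  rcases lt_trichotomy m k with hmk | hmk | hmk
  · -- m < k
    have hcast : (m:ℝ) < (k:ℝ) := by exact_mod_cast hmk
    have h := hf.slope_mono_adjacent hm0 hk10 hcast (by linarith)
    have hone : ((k:ℝ)+1) - (k:ℝ) = 1 := by ring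
    rw [hone, div_one] at h
    have hpos : (0:ℝ) < (k:ℝ) - (m:ℝ) := by linarith
    rw [div_le_iff₀ hpos] at h
    nlinarith [h]
  · -- m = k
    subst hmk
    simp
  · -- k < m
    rcases Nat.lt_or_ge m (k+1+1) with hm1 | hm1
    · -- m = k+1
      have : m = k+1 := by omega
      subst this
      push_cast
      have : ((k:ℝ)+1) - (k:ℝ) = 1 := by ring
      nlinarith [this]
    · -- m ≥ k+2
      have hcast : (k:ℝ)+1 < (m:ℝ) := by
        have : (k+2 : ℕ) ≤ m := hm1
        have h2 : ((k:ℝ)+2) ≤ (m:ℝ) := by exact_mod_cast this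
        linarith
      have h := hf.slope_mono_adjacent hk0 hm0 (by linarith : (k:ℝ) < (k:ℝ)+1) hcast
      have hone : ((k:ℝ)+1) - (k:ℝ) = 1 := by ring
      rw [hone, div_one] at h
      have hpos : (0:ℝ) < (m:ℝ) - ((k:ℝ)+1) := by linarith
      rw [le_div_iff₀ hpos] at h
      nlinarith [h]

lemma kap_secant (hβA : 0 < βA) (hβH : 0 < βH) (hαA : 0 < αA) (hαH : 0 < αH) (k m : ℕ) :
    (((βA*((k:ℝ)+1)+αA) * (Real.log (βA*((k:ℝ)+1)+αA) - Real.log (βH*((k:ℝ)+1)+αH))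
        - (βA*(k:ℝ)+αA) * (Real.log (βA*(k:ℝ)+αA) - Real.log (βH*(k:ℝ)+αH))) + βH - βA) * (m:ℝ)
      + ((βA*(k:ℝ)+αA) * (Real.log (βA*(k:ℝ)+αA) - Real.log (βH*(k:ℝ)+αH))
          - ((βA*((k:ℝ)+1)+αA) * (Real.log (βA*((k:ℝ)+1)+αA) - Real.log (βH*((k:ℝ)+1)+αH))
              - (βA*(k:ℝ)+αA) * (Real.log (βA*(k:ℝ)+αA) - Real.log (βH*(k:ℝ)+αH))) * (k:ℝ)
          + αH - αA)
      ≤ kapGW βA αA βH αH m := by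
  have hm0 : (0:ℝ) ≤ (m:ℝ) := Nat.cast_nonneg m
  have hlA : (0:ℝ) < βA*(m:ℝ)+αA := by positivity
  have hlH : (0:ℝ) < βH*(m:ℝ)+αH := by positivity
  have hsec := convex_secant_nat (ell_convexOn hβA hβH hαA hαH) k m
  have hkap : kapGW βA αA βH αH m
      = (βA*(m:ℝ)+αA) * (Real.log (βA*(m:ℝ)+αA) - Real.log (βH*(m:ℝ)+αH))
        + (βH - βA)*(m:ℝ) + (αH - αA) := by
    unfold kapGW
    rw [Real.log_div hlA.ne' hlH.ne']
    ring
  rw [hkap]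
  nlinarith [hsec]

end Aux

/-- Closed-form lower bounds (tangent-line and secant-line families) for
the relative entropy on `P_SP` without `P_SP,1` (strictly positive parameters with
`(β_A,α_A) ≠ (β_H,α_H)` and `α_H·β_A − α_A·β_H ≠ 0`). Here `R(y) = f_A(y)/f_H(y)`,
`G(y) = β_A·log R(y) + β_H·(1 − R(y))`, `L(k) = f_A(k)·log(f_A(k)/f_H(k))`,
`D_k = L(k+1) − L(k)`. -/
theorem relEnt_lower_bounds (βA βH αA αH : ℝ)
    (hβA : 0 < βA) (hβH : 0 < βH) (hαA : 0 < αA) (hαH : 0 < αH)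
    (hne : (βA, αA) ≠ (βH, αH)) (hγ : αH * βA - αA * βH ≠ 0)
    (ω₀ : ℕ) (hω₀ : 1 ≤ ω₀) (n : ℕ) (hn : 1 ≤ n)
    (R : ℝ → ℝ) (hR : ∀ y : ℝ, R y = (βA * y + αA) / (βH * y + αH))
    (G : ℝ → ℝ) (hG : ∀ y : ℝ, G y = βA * Real.log (R y) + βH * (1 - R y))
    (L : ℕ → ℝ)
    (hL : ∀ k : ℕ, L k = (βA * (k : ℝ) + αA)
      * Real.log ((βA * (k : ℝ) + αA) / (βH * (k : ℝ) + αH)))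
    (D : ℕ → ℝ) (hD : ∀ k : ℕ, D k = L (k + 1) - L k) :
    (∀ y : ℝ, 0 ≤ y →
      (βA ≠ 1 → relEnt βA αA βH αH ω₀ n ≥
        G y * ((1 - βA ^ n) / (1 - βA)) * ((ω₀ : ℝ) - αA / (1 - βA))
          + ((αA / (βA * (1 - βA))) * G y + (αH - αA * βH / βA) * (1 - R y)) * (n : ℝ)) ∧
      (βA = 1 → relEnt βA αA βH αH ω₀ n ≥
        (Real.log (R y) + βH * (1 - R y))
            * ((αA / 2) * (n : ℝ) ^ 2 + ((ω₀ : ℝ) + αA / 2) * (n : ℝ))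
          + (αH - αA * βH) * (1 - R y) * (n : ℝ))) ∧
    (∀ k : ℕ,
      (βA ≠ 1 → relEnt βA αA βH αH ω₀ n ≥
        (D k + βH - βA) * ((1 - βA ^ n) / (1 - βA)) * ((ω₀ : ℝ) - αA / (1 - βA))
          + ((αA / (βA * (1 - βA))) * (D k + βH - βA) - D k * ((k : ℝ) + αA / βA)
              + L k - αA * βH / βA + αH) * (n : ℝ)) ∧
      (βA = 1 → relEnt βA αA βH αH ω₀ n ≥
        (D k + βH - 1) * ((αA / 2) * (n : ℝ) ^ 2 + ((ω₀ : ℝ) + αA / 2) * (n : ℝ))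
          - (D k * ((k : ℝ) + αA) - L k + αA * βH - αH) * (n : ℝ))) := by
  have hrel : relEnt βA αA βH αH ω₀ n = KLGW βA αA βH αH n ω₀ := rfl
  have hL' : ∀ j : ℕ, L j
      = (βA*(j:ℝ)+αA) * (Real.log (βA*(j:ℝ)+αA) - Real.log (βH*(j:ℝ)+αH)) := by
    intro j
    have h1 : (0:ℝ) < βA*(j:ℝ)+αA := by positivity
    have h2 : (0:ℝ) < βH*(j:ℝ)+αH := by positivity
    rw [hL j, Real.log_div h1.ne' h2.ne']
  constructor
  · -- tangent family
    intro y hy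
    have hk : ∀ m : ℕ, G y * (m:ℝ) + (αA * Real.log (R y) + αH * (1 - R y))
        ≤ kapGW βA αA βH αH m := by
      intro m
      rw [hG, hR]
      exact kap_tangent hβA hβH hαA hαH y hy m
    have hmain := KLGW_lower hβA hβH hαA hαH _ _ hk n ω₀
    constructor
    · intro hbne
      have h1βA : 1 - βA ≠ 0 := sub_ne_zero.2 (Ne.symm hbne)
      rw [ge_iff_le, hrel]
      refine le_trans (le_of_eq ?_) hmain
      rw [srC_ne hbne, srD_ne hbne, hG]
      field_simp
      ring
    · intro hbeq
      subst hbeq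
      rw [ge_iff_le, hrel]
      refine le_trans (le_of_eq ?_) hmain
      rw [srC_one, srD_one, hG]
      ring
  · -- secant family
    intro k
    have hDk : D k
        = (βA*((k:ℝ)+1)+αA) * (Real.log (βA*((k:ℝ)+1)+αA) - Real.log (βH*((k:ℝ)+1)+αH))
          - (βA*(k:ℝ)+αA) * (Real.log (βA*(k:ℝ)+αA) - Real.log (βH*(k:ℝ)+αH)) := by
      rw [hD, hL' (k+1), hL' k]
      push_cast
      ring
    have hk : ∀ m : ℕ, (D k + βH - βA) * (m:ℝ) + (L k - D k * (k:ℝ) + αH - αA)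
        ≤ kapGW βA αA βH αH m := by
      intro m
      have h := kap_secant hβA hβH hαA hαH k m
      rw [hDk, hL' k]
      linarith [h]
    have hmain := KLGW_lower hβA hβH hαA hαH _ _ hk n ω₀
    constructor
    · intro hbne
      have h1βA : 1 - βA ≠ 0 := sub_ne_zero.2 (Ne.symm hbne)
      rw [ge_iff_le, hrel]
      refine le_trans (le_of_eq ?_) hmain
      rw [srC_ne hbne, srD_ne hbne]
      field_simp
      ring
    · intro hbeq
      subst hbeq
      rw [ge_iff_le, hrel]
      refine le_trans (le_of_eq ?_) hmain
      rw [srC_one, srD_one]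
      ring
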